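/- With a = ρT/(MN(T−N)) and b = (N+ρT)/(MN(T−2N)), T > 2N, as ρ → 0 the optimal effective SNR ρ_eff* = (MN(T−N)/(T−2N))(2b − a − 2√(b²−ab)) satisfies ρ_eff* = ρ²T²/(4N(T−N)) + o(ρ²). -/

import Mathlib

open Filter Asymptotics

lemma key_sqrt (u v : ℝ) (hu : 0 ≤ u) (hv : 0 ≤ v) (hd : Real.sqrt u + Real.sqrt v ≠ 0) :
    u + v - 2 * Real.sqrt (u * v) = (u - v) ^ 2 / (Real.sqrt u + Real.sqrt v) ^ 2 := by
  rw [Real.sqrt_mul hu v]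
  have h2 : Real.sqrt u ^ 2 = u := Real.sq_sqrt hu
  have h3 : Real.sqrt v ^ 2 = v := Real.sq_sqrt hv
  set s := Real.sqrt u
  set t := Real.sqrt v
  rw [← h2, ← h3, eq_div_iff (pow_ne_zero 2 hd)]
  ring

theorem stmt_6 (M N T : ℕ) (hM : 0 < M) (hN : 0 < N) (hT : 2 * N < T) :
    (fun ρ : ℝ =>
      (let a : ℝ := ρ * T / ((M : ℝ) * N * ((T : ℝ) - N))
       let b : ℝ := ((N : ℝ) + ρ * T) / ((M : ℝ) * N * ((T : ℝ) - 2 * N))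
       ((M : ℝ) * N * ((T : ℝ) - N) / ((T : ℝ) - 2 * N)) *
         (2 * b - a - 2 * Real.sqrt (b ^ 2 - a * b)))
      - ρ ^ 2 * (T : ℝ) ^ 2 / (4 * (N : ℝ) * ((T : ℝ) - N)))
      =o[nhdsWithin 0 (Set.Ioi 0)] (fun ρ : ℝ => ρ ^ 2) := by
  have hM' : (0:ℝ) < M := by exact_mod_cast hM
  have hN' : (0:ℝ) < N := by exact_mod_cast hN
  have hT2 : (0:ℝ) < (T:ℝ) - 2*N := by
    have : ((2*N:ℕ):ℝ) < (T:ℕ) := by exact_mod_cast hT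
    push_cast at this; linarith
  have hTN : (0:ℝ) < (T:ℝ) - N := by linarith
  have hT' : (0:ℝ) < T := by linarith
  set c1 : ℝ := (M:ℝ) * N * ((T:ℝ) - N) with hc1
  set c2 : ℝ := (M:ℝ) * N * ((T:ℝ) - 2*N) with hc2
  have hc1p : 0 < c1 := by positivity
  have hc2p : 0 < c2 := by positivity
  have hc21 : c2 ≤ c1 := by
    rw [hc1, hc2]; nlinarith
  set L : ℝ := (T:ℝ)^2 / (4 * (N:ℝ) * ((T:ℝ) - N)) with hL
  set K : ℝ := c1 / ((T:ℝ) - 2*N) with hK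
  set A : ℝ → ℝ := fun ρ => ρ * T / c1 with hA
  set B : ℝ → ℝ := fun ρ => ((N:ℝ) + ρ * T) / c2 with hB
  set G : ℝ → ℝ := fun ρ =>
    K * ((T:ℝ)/c1)^2 / (Real.sqrt (B ρ) + Real.sqrt (B ρ - A ρ))^2 - L with hG
  -- limit of G
  have hBlim : Tendsto B (nhdsWithin 0 (Set.Ioi 0)) (nhds ((N:ℝ)/c2)) := by
    have : Tendsto B (nhds 0) (nhds ((N:ℝ)/c2)) := by
      have : Continuous B := by fun_prop
      have h0 : B 0 = (N:ℝ)/c2 := by simp [hB]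
      simpa [h0] using this.tendsto 0
    exact this.mono_left nhdsWithin_le_nhds
  have hAlim : Tendsto A (nhdsWithin 0 (Set.Ioi 0)) (nhds 0) := by
    have : Tendsto A (nhds 0) (nhds 0) := by
      have : Continuous A := by fun_prop
      have h0 : A 0 = 0 := by simp [hA]
      simpa [h0] using this.tendsto 0
    exact this.mono_left nhdsWithin_le_nhds
  have hden : Tendsto (fun ρ => (Real.sqrt (B ρ) + Real.sqrt (B ρ - A ρ))^2)
      (nhdsWithin 0 (Set.Ioi 0)) (nhds ((2 * Real.sqrt ((N:ℝ)/c2))^2)) := by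
    have h1 : Tendsto (fun ρ => Real.sqrt (B ρ)) (nhdsWithin 0 (Set.Ioi 0))
        (nhds (Real.sqrt ((N:ℝ)/c2))) :=
      (Real.continuous_sqrt.tendsto _).comp hBlim
    have h2 : Tendsto (fun ρ => Real.sqrt (B ρ - A ρ)) (nhdsWithin 0 (Set.Ioi 0))
        (nhds (Real.sqrt ((N:ℝ)/c2))) := by
      have : Tendsto (fun ρ => B ρ - A ρ) (nhdsWithin 0 (Set.Ioi 0)) (nhds ((N:ℝ)/c2)) := by
        simpa using hBlim.sub hAlim
      exact (Real.continuous_sqrt.tendsto _).comp this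
    have := (h1.add h2).pow 2
    convert this using 2
    ring
  have hd2 : (2 * Real.sqrt ((N:ℝ)/c2))^2 = 4 * (N:ℝ)/c2 := by
    rw [mul_pow, Real.sq_sqrt (by positivity)]
    ring
  have hGlim : Tendsto G (nhdsWithin 0 (Set.Ioi 0)) (nhds 0) := by
    have hne : ((2 * Real.sqrt ((N:ℝ)/c2))^2) ≠ 0 := by
      rw [hd2]; positivity
    have h1 : Tendsto (fun ρ => K * ((T:ℝ)/c1)^2 / (Real.sqrt (B ρ) + Real.sqrt (B ρ - A ρ))^2)
        (nhdsWithin 0 (Set.Ioi 0)) (nhds (K * ((T:ℝ)/c1)^2 / (2 * Real.sqrt ((N:ℝ)/c2))^2)) :=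
      Tendsto.div tendsto_const_nhds hden hne
    have := h1.sub (tendsto_const_nhds (x := L) (f := nhdsWithin (0:ℝ) (Set.Ioi 0)))
    have hval : K * ((T:ℝ)/c1)^2 / (2 * Real.sqrt ((N:ℝ)/c2))^2 - L = 0 := by
      rw [hd2, hK, hL, hc1, hc2]
      field_simp
      ring_nf
      have hT2' : (T:ℝ) - N * 2 ≠ 0 := by linarith
      field_simp
      ring
    rw [hval] at this
    rw [hG]
    exact this
  -- pointwise equality of quotients
  have hEq : ∀ ρ ∈ Set.Ioi (0:ℝ),
      ((let a : ℝ := ρ * T / ((M : ℝ) * N * ((T : ℝ) - N))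
       let b : ℝ := ((N : ℝ) + ρ * T) / ((M : ℝ) * N * ((T : ℝ) - 2 * N))
       ((M : ℝ) * N * ((T : ℝ) - N) / ((T : ℝ) - 2 * N)) *
         (2 * b - a - 2 * Real.sqrt (b ^ 2 - a * b)))
      - ρ ^ 2 * (T : ℝ) ^ 2 / (4 * (N : ℝ) * ((T : ℝ) - N))) / ρ ^ 2 = G ρ := by
    intro ρ hρ
    have hρ0 : (0:ℝ) < ρ := hρ
    show (K * (2 * B ρ - A ρ - 2 * Real.sqrt ((B ρ)^2 - A ρ * B ρ))
        - ρ ^ 2 * (T:ℝ)^2 / (4 * (N:ℝ) * ((T:ℝ) - N))) / ρ^2 = G ρ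
    have hu : 0 < B ρ := by
      rw [hB]; positivity
    have hv : 0 < B ρ - A ρ := by
      rw [hA, hB]
      simp only
      have h1 : ρ * T / c1 ≤ ρ * T / c2 :=
        div_le_div_of_nonneg_left (by positivity) hc2p hc21
      have h2 : ρ * T / c2 < ((N:ℝ) + ρ * T) / c2 :=
        (div_lt_div_iff_of_pos_right hc2p).mpr (by linarith)
      linarith
    have hab : (B ρ)^2 - A ρ * B ρ = B ρ * (B ρ - A ρ) := by ring
    have hdne : Real.sqrt (B ρ) + Real.sqrt (B ρ - A ρ) ≠ 0 := by
      have := Real.sqrt_pos.mpr hu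
      have := Real.sqrt_nonneg (B ρ - A ρ)
      positivity
    have hkey := key_sqrt (B ρ) (B ρ - A ρ) hu.le hv.le hdne
    have h2ba : 2 * B ρ - A ρ - 2 * Real.sqrt ((B ρ)^2 - A ρ * B ρ)
        = (A ρ)^2 / (Real.sqrt (B ρ) + Real.sqrt (B ρ - A ρ))^2 := by
      rw [hab]
      have : B ρ + (B ρ - A ρ) - 2 * Real.sqrt (B ρ * (B ρ - A ρ))
          = (B ρ - (B ρ - A ρ))^2 / (Real.sqrt (B ρ) + Real.sqrt (B ρ - A ρ))^2 := hkey
      calc 2 * B ρ - A ρ - 2 * Real.sqrt (B ρ * (B ρ - A ρ))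
          = B ρ + (B ρ - A ρ) - 2 * Real.sqrt (B ρ * (B ρ - A ρ)) := by ring
        _ = (B ρ - (B ρ - A ρ))^2 / (Real.sqrt (B ρ) + Real.sqrt (B ρ - A ρ))^2 := hkey
        _ = (A ρ)^2 / (Real.sqrt (B ρ) + Real.sqrt (B ρ - A ρ))^2 := by ring_nf
    rw [h2ba, hG, hA, hL]
    have hDne : (Real.sqrt (B ρ) + Real.sqrt (B ρ - A ρ))^2 ≠ 0 := pow_ne_zero 2 hdne
    field_simp
  -- conclude
  rw [isLittleO_iff_tendsto']
  · exact hGlim.congr' (by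
      filter_upwards [self_mem_nhdsWithin] with ρ hρ
      exact (hEq ρ hρ).symm)
  · filter_upwards [self_mem_nhdsWithin] with ρ hρ h
    exact absurd h (pow_ne_zero 2 (ne_of_gt hρ))
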